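/- Let Q_1 and Q_2 be the quantile functions of probability measures μ_1 and μ_2 on ℝ. For p ≥ 1, the p-Wasserstein distance satisfies W_p(μ_1, μ_2)^p = ∫_0^1 |Q_1(r) − Q_2(r)|^p dr, i.e., the infimum of E[|X_1 − X_2|^p] over all couplings (X_1, X_2) of μ_1 and μ_2 is attained by the comonotone coupling (Q_1(U), Q_2(U)) with U uniform on (0,1). -/

import Mathlib

open MeasureTheory Set Filter ProbabilityTheory
open scoped Topology ENNReal

/-- CDF of a measure on ℝ. -/
noncomputable def mcdf (μ : Measure ℝ) (x : ℝ) : ℝ := (μ (Set.Iic x)).toReal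

/-- Quantile function of a measure on ℝ. -/
noncomputable def mquantile (μ : Measure ℝ) (r : ℝ) : ℝ := sInf {x : ℝ | r ≤ mcdf μ x}

section Quantile
variable (μ : Measure ℝ) [IsProbabilityMeasure μ]

lemma mcdf_eq_cdf (x : ℝ) : mcdf μ x = cdf μ x := (cdf_eq_real μ x).symm

lemma mcdf_nonneg (x : ℝ) : 0 ≤ mcdf μ x := by rw [mcdf_eq_cdf]; exact cdf_nonneg μ x

lemma mcdf_le_one (x : ℝ) : mcdf μ x ≤ 1 := by rw [mcdf_eq_cdf]; exact cdf_le_one μ x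

lemma mcdf_mono : Monotone (mcdf μ) := by
  intro a b hab
  rw [mcdf_eq_cdf, mcdf_eq_cdf]; exact monotone_cdf μ hab

lemma mcdf_set_nonempty {r : ℝ} (hr : r < 1) : {x : ℝ | r ≤ mcdf μ x}.Nonempty := by
  have h := tendsto_cdf_atTop μ
  have : ∀ᶠ x in atTop, r < cdf μ x := h.eventually_const_lt hr
  obtain ⟨x, hx⟩ := this.exists
  exact ⟨x, by rw [mem_setOf_eq, mcdf_eq_cdf]; exact hx.le⟩

lemma mcdf_set_bddBelow {r : ℝ} (hr : 0 < r) : BddBelow {x : ℝ | r ≤ mcdf μ x} := by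
  have h := tendsto_cdf_atBot μ
  have : ∀ᶠ x in atBot, cdf μ x < r := h.eventually_lt_const hr
  obtain ⟨x, hx⟩ := this.exists
  refine ⟨x, fun y hy => ?_⟩
  by_contra hxy
  push_neg at hxy
  have h2 : mcdf μ y ≤ mcdf μ x := mcdf_mono μ hxy.le
  have h3 : mcdf μ x < r := by rw [mcdf_eq_cdf]; exact hx
  exact absurd (hy.trans h2) (not_le.2 h3)

lemma mquantile_le_iff {r x : ℝ} (hr0 : 0 < r) (hr1 : r < 1) :
    mquantile μ r ≤ x ↔ r ≤ mcdf μ x := by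
  constructor
  · intro h
    have hne := mcdf_set_nonempty μ hr1
    have hbd := mcdf_set_bddBelow μ hr0
    rw [mcdf_eq_cdf]
    have hrc : ContinuousWithinAt (cdf μ) (Ici x) x := (cdf μ).right_continuous' x
    have hev : ∀ᶠ y in 𝓝[>] x, r ≤ cdf μ y := by
      filter_upwards [self_mem_nhdsWithin] with y hy
      obtain ⟨z, hz, hzy⟩ := (csInf_lt_iff hbd hne).1 (h.trans_lt hy)
      calc r ≤ mcdf μ z := hz
      _ ≤ mcdf μ y := mcdf_mono μ hzy.le
      _ = cdf μ y := mcdf_eq_cdf μ y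
    have ht : Tendsto (cdf μ) (𝓝[>] x) (𝓝 (cdf μ x)) :=
      hrc.tendsto.mono_left (nhdsWithin_mono x Ioi_subset_Ici_self)
    exact ge_of_tendsto ht hev
  · intro h
    exact csInf_le (mcdf_set_bddBelow μ hr0) h

lemma monotoneOn_mquantile : MonotoneOn (mquantile μ) (Ioo (0:ℝ) 1) := by
  intro a ha b hb hab
  rw [mquantile_le_iff μ ha.1 ha.2]
  have : b ≤ mcdf μ (mquantile μ b) :=
    (mquantile_le_iff μ hb.1 hb.2).1 le_rfl
  exact hab.trans this

lemma aemeasurable_mquantile :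
    AEMeasurable (mquantile μ) (volume.restrict (Ioo (0:ℝ) 1)) :=
  aemeasurable_restrict_of_monotoneOn measurableSet_Ioo (monotoneOn_mquantile μ)

lemma map_mquantile :
    (volume.restrict (Ioo (0:ℝ) 1)).map (mquantile μ) = μ := by
  have hq := aemeasurable_mquantile μ
  refine Measure.ext_of_Iic _ _ (fun x => ?_)
  rw [Measure.map_apply_of_aemeasurable hq measurableSet_Iic]
  have hset : mquantile μ ⁻¹' Iic x ∩ Ioo (0:ℝ) 1 = Iic (mcdf μ x) ∩ Ioo (0:ℝ) 1 := by
    ext r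
    simp only [mem_inter_iff, mem_preimage, mem_Iic, mem_Ioo, and_congr_left_iff]
    intro hr
    rw [mquantile_le_iff μ hr.1 hr.2]
  rw [Measure.restrict_apply₀ (hq.nullMeasurable measurableSet_Iic), hset]
  have h0 : 0 ≤ mcdf μ x := mcdf_nonneg μ x
  have h1 : mcdf μ x ≤ 1 := mcdf_le_one μ x
  have hμ : μ (Iic x) = ENNReal.ofReal (mcdf μ x) := by
    rw [mcdf_eq_cdf]; exact (ofReal_cdf μ x).symm
  rcases lt_or_eq_of_le h1 with h1' | h1'
  · have : Iic (mcdf μ x) ∩ Ioo (0:ℝ) 1 = Ioc 0 (mcdf μ x) := by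
      ext r
      simp only [mem_inter_iff, mem_Iic, mem_Ioo, mem_Ioc]
      constructor
      · rintro ⟨h, h2, _⟩; exact ⟨h2, h⟩
      · rintro ⟨h2, h⟩; exact ⟨h, h2, h.trans_lt h1'⟩
    rw [this, Real.volume_Ioc, hμ, sub_zero]
  · have : Iic (mcdf μ x) ∩ Ioo (0:ℝ) 1 = Ioo 0 1 := by
      apply inter_eq_self_of_subset_right
      intro r hr
      simp only [mem_Iic]
      rw [h1']
      exact hr.2.le
    rw [this, Real.volume_Ioo, hμ, ← h1']
    norm_num

end Quantile

section SqEvent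

def sqEvent (s t : ℝ) : Set (ℝ × ℝ) :=
  {z | (min z.1 z.2 ≤ s ∧ s < max z.1 z.2) ∧ (min z.1 z.2 ≤ t ∧ t < max z.1 z.2)}

lemma measurableSet_sqEvent (s t : ℝ) : MeasurableSet (sqEvent s t) := by
  unfold sqEvent
  apply MeasurableSet.inter <;> apply MeasurableSet.inter
  · exact measurableSet_le (measurable_fst.min measurable_snd) measurable_const
  · exact measurableSet_lt measurable_const (measurable_fst.max measurable_snd)
  · exact measurableSet_le (measurable_fst.min measurable_snd) measurable_const
  · exact measurableSet_lt measurable_const (measurable_fst.max measurable_snd)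

lemma measurableSet_quadrant (s t : ℝ) : MeasurableSet {z : ℝ × ℝ | z.1 ≤ s ∧ z.2 ≤ t} :=
  MeasurableSet.inter (measurableSet_le measurable_fst measurable_const)
    (measurableSet_le measurable_snd measurable_const)

lemma measurableSet_fstle (s : ℝ) : MeasurableSet {z : ℝ × ℝ | z.1 ≤ s} :=
  measurableSet_le measurable_fst measurable_const

lemma measurableSet_sndle (s : ℝ) : MeasurableSet {z : ℝ × ℝ | z.2 ≤ s} :=
  measurableSet_le measurable_snd measurable_const

lemma sqEvent_indicator_identity (s t : ℝ) (z : ℝ × ℝ) :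
    (sqEvent s t).indicator (1 : ℝ × ℝ → ℝ) z
      + ({z : ℝ × ℝ | z.1 ≤ s ∧ z.2 ≤ t}).indicator 1 z
      + ({z : ℝ × ℝ | z.1 ≤ t ∧ z.2 ≤ s}).indicator 1 z
    = ({z : ℝ × ℝ | z.1 ≤ s ⊓ t}).indicator 1 z
      + ({z : ℝ × ℝ | z.2 ≤ s ⊓ t}).indicator 1 z := by
  obtain ⟨x, y⟩ := z
  simp only [Set.indicator_apply, sqEvent, mem_setOf_eq, Pi.one_apply, ← not_le,
    min_le_iff, max_le_iff, le_inf_iff]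
  by_cases h1 : x ≤ s <;> by_cases h2 : y ≤ s <;> by_cases h3 : x ≤ t <;> by_cases h4 : y ≤ t
  all_goals simp [h1, h2, h3, h4]
  · exact absurd ((h1.trans (not_le.1 h2).le).trans h4) h3
  · exact absurd ((h2.trans (not_le.1 h1).le).trans h3) h4

lemma sqEvent_measure_identity (γ : Measure (ℝ × ℝ)) [IsFiniteMeasure γ] (s t : ℝ) :
    (γ (sqEvent s t)).toReal
      + (γ {z : ℝ × ℝ | z.1 ≤ s ∧ z.2 ≤ t}).toReal
      + (γ {z : ℝ × ℝ | z.1 ≤ t ∧ z.2 ≤ s}).toReal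
    = (γ {z : ℝ × ℝ | z.1 ≤ s ⊓ t}).toReal + (γ {z : ℝ × ℝ | z.2 ≤ s ⊓ t}).toReal := by
  have hint : ∀ (S : Set (ℝ × ℝ)), MeasurableSet S →
      Integrable (S.indicator (1 : ℝ × ℝ → ℝ)) γ := by
    intro S hS
    rw [integrable_indicator_iff hS]
    exact integrableOn_const (measure_ne_top γ S)
  have h1 := hint _ (measurableSet_sqEvent s t)
  have h2 := hint _ (measurableSet_quadrant s t)
  have h3 := hint _ (measurableSet_quadrant t s)
  have h4 := hint _ (measurableSet_fstle (s ⊓ t))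
  have h5 := hint _ (measurableSet_sndle (s ⊓ t))
  have h12 : Integrable (fun z => (sqEvent s t).indicator (1 : ℝ × ℝ → ℝ) z
      + ({z : ℝ × ℝ | z.1 ≤ s ∧ z.2 ≤ t}).indicator 1 z) γ := h1.add h2
  have hL : ∫ z, ((sqEvent s t).indicator (1 : ℝ × ℝ → ℝ) z
      + ({z : ℝ × ℝ | z.1 ≤ s ∧ z.2 ≤ t}).indicator 1 z
      + ({z : ℝ × ℝ | z.1 ≤ t ∧ z.2 ≤ s}).indicator 1 z) ∂γ
      = (γ (sqEvent s t)).toReal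
      + (γ {z : ℝ × ℝ | z.1 ≤ s ∧ z.2 ≤ t}).toReal
      + (γ {z : ℝ × ℝ | z.1 ≤ t ∧ z.2 ≤ s}).toReal := by
    rw [integral_add h12 h3, integral_add h1 h2, integral_indicator_one (measurableSet_sqEvent s t),
      integral_indicator_one (measurableSet_quadrant s t),
      integral_indicator_one (measurableSet_quadrant t s)]
    rfl
  have hR : ∫ z, (({z : ℝ × ℝ | z.1 ≤ s ⊓ t}).indicator (1 : ℝ × ℝ → ℝ) z
      + ({z : ℝ × ℝ | z.2 ≤ s ⊓ t}).indicator 1 z) ∂γ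
      = (γ {z : ℝ × ℝ | z.1 ≤ s ⊓ t}).toReal + (γ {z : ℝ × ℝ | z.2 ≤ s ⊓ t}).toReal := by
    rw [integral_add h4 h5, integral_indicator_one (measurableSet_fstle (s ⊓ t)),
      integral_indicator_one (measurableSet_sndle (s ⊓ t))]
    rfl
  rw [← hL, ← hR]
  exact integral_congr_ae (Eventually.of_forall fun z => sqEvent_indicator_identity s t z)

end SqEvent

section Coupling
variable (μ₁ μ₂ : Measure ℝ) [IsProbabilityMeasure μ₁] [IsProbabilityMeasure μ₂]

lemma measure_Iic_eq_ofReal_mcdf (x : ℝ) : μ₁ (Iic x) = ENNReal.ofReal (mcdf μ₁ x) := by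
  rw [mcdf_eq_cdf]; exact (ofReal_cdf μ₁ x).symm

lemma coupling_fst_apply {γ : Measure (ℝ × ℝ)} [IsProbabilityMeasure γ]
    (h1 : γ.map Prod.fst = μ₁) (s : ℝ) :
    γ {z : ℝ × ℝ | z.1 ≤ s} = ENNReal.ofReal (mcdf μ₁ s) := by
  have : γ {z : ℝ × ℝ | z.1 ≤ s} = (γ.map Prod.fst) (Iic s) := by
    rw [Measure.map_apply measurable_fst measurableSet_Iic]; rfl
  rw [this, h1, measure_Iic_eq_ofReal_mcdf]

lemma coupling_snd_apply {γ : Measure (ℝ × ℝ)} [IsProbabilityMeasure γ]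
    (h2 : γ.map Prod.snd = μ₂) (s : ℝ) :
    γ {z : ℝ × ℝ | z.2 ≤ s} = ENNReal.ofReal (mcdf μ₂ s) := by
  have : γ {z : ℝ × ℝ | z.2 ≤ s} = (γ.map Prod.snd) (Iic s) := by
    rw [Measure.map_apply measurable_snd measurableSet_Iic]; rfl
  rw [this, h2, measure_Iic_eq_ofReal_mcdf]

lemma coupling_quadrant_le {γ : Measure (ℝ × ℝ)} [IsProbabilityMeasure γ]
    (h1 : γ.map Prod.fst = μ₁) (h2 : γ.map Prod.snd = μ₂) (s t : ℝ) :
    γ {z : ℝ × ℝ | z.1 ≤ s ∧ z.2 ≤ t}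
      ≤ ENNReal.ofReal (mcdf μ₁ s ⊓ mcdf μ₂ t) := by
  rcases le_total (mcdf μ₁ s) (mcdf μ₂ t) with h | h
  · rw [inf_eq_left.2 h, ← coupling_fst_apply μ₁ h1 s]
    exact measure_mono (fun z hz => hz.1)
  · rw [inf_eq_right.2 h, ← coupling_snd_apply μ₂ h2 t]
    exact measure_mono (fun z hz => hz.2)

/-- The comonotone coupling. -/
noncomputable def comCoupling : Measure (ℝ × ℝ) :=
  Measure.map (fun r => (mquantile μ₁ r, mquantile μ₂ r)) (volume.restrict (Set.Ioo (0:ℝ) 1))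

lemma aemeasurable_pair :
    AEMeasurable (fun r => (mquantile μ₁ r, mquantile μ₂ r)) (volume.restrict (Ioo (0:ℝ) 1)) :=
  (aemeasurable_mquantile μ₁).prodMk (aemeasurable_mquantile μ₂)

instance : IsProbabilityMeasure (volume.restrict (Ioo (0:ℝ) 1)) := by
  constructor
  simp [Real.volume_Ioo]

instance : IsProbabilityMeasure (comCoupling μ₁ μ₂) :=
  Measure.isProbabilityMeasure_map (aemeasurable_pair μ₁ μ₂)

lemma comCoupling_fst : (comCoupling μ₁ μ₂).map Prod.fst = μ₁ := by
  rw [comCoupling, AEMeasurable.map_map_of_aemeasurable measurable_fst.aemeasurable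
    (aemeasurable_pair μ₁ μ₂)]
  exact map_mquantile μ₁

lemma comCoupling_snd : (comCoupling μ₁ μ₂).map Prod.snd = μ₂ := by
  rw [comCoupling, AEMeasurable.map_map_of_aemeasurable measurable_snd.aemeasurable
    (aemeasurable_pair μ₁ μ₂)]
  exact map_mquantile μ₂

lemma vol_Iic_inter_Ioo {c : ℝ} (h1 : c ≤ 1) :
    volume (Iic c ∩ Ioo (0:ℝ) 1) = ENNReal.ofReal c := by
  rcases lt_or_eq_of_le h1 with h1' | h1'
  · have : Iic c ∩ Ioo (0:ℝ) 1 = Ioc 0 c := by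
      ext r
      simp only [mem_inter_iff, mem_Iic, mem_Ioo, mem_Ioc]
      constructor
      · rintro ⟨h, h2, _⟩; exact ⟨h2, h⟩
      · rintro ⟨h2, h⟩; exact ⟨h, h2, h.trans_lt h1'⟩
    rw [this, Real.volume_Ioc, sub_zero]
  · have : Iic c ∩ Ioo (0:ℝ) 1 = Ioo 0 1 := by
      apply inter_eq_self_of_subset_right
      intro r hr
      simp only [mem_Iic]
      rw [h1']
      exact hr.2.le
    rw [this, Real.volume_Ioo, h1']
    norm_num

lemma comCoupling_quadrant (s t : ℝ) :
    comCoupling μ₁ μ₂ {z : ℝ × ℝ | z.1 ≤ s ∧ z.2 ≤ t}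
      = ENNReal.ofReal (mcdf μ₁ s ⊓ mcdf μ₂ t) := by
  rw [comCoupling, Measure.map_apply_of_aemeasurable (aemeasurable_pair μ₁ μ₂)
    (measurableSet_quadrant s t)]
  rw [Measure.restrict_apply₀ (((aemeasurable_pair μ₁ μ₂).nullMeasurable
    (measurableSet_quadrant s t)))]
  show volume ({r : ℝ | mquantile μ₁ r ≤ s ∧ mquantile μ₂ r ≤ t} ∩ Ioo (0:ℝ) 1) = _
  have hset : {r : ℝ | mquantile μ₁ r ≤ s ∧ mquantile μ₂ r ≤ t} ∩ Ioo (0:ℝ) 1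
      = Iic (mcdf μ₁ s ⊓ mcdf μ₂ t) ∩ Ioo (0:ℝ) 1 := by
    ext r
    simp only [mem_inter_iff, mem_setOf_eq, mem_Iic, and_congr_left_iff, le_inf_iff]
    intro hr
    rw [mquantile_le_iff μ₁ hr.1 hr.2, mquantile_le_iff μ₂ hr.1 hr.2]
  rw [hset, vol_Iic_inter_Ioo (inf_le_left.trans (mcdf_le_one μ₁ s))]

lemma sqEvent_comparison {γ : Measure (ℝ × ℝ)} [IsProbabilityMeasure γ]
    (h1 : γ.map Prod.fst = μ₁) (h2 : γ.map Prod.snd = μ₂) (s t : ℝ) :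
    comCoupling μ₁ μ₂ (sqEvent s t) ≤ γ (sqEvent s t) := by
  set γ₀ := comCoupling μ₁ μ₂ with hγ₀
  have idγ := sqEvent_measure_identity γ s t
  have idγ₀ := sqEvent_measure_identity γ₀ s t
  rw [coupling_fst_apply μ₁ h1 (s ⊓ t), coupling_snd_apply μ₂ h2 (s ⊓ t)] at idγ
  rw [coupling_fst_apply μ₁ (comCoupling_fst μ₁ μ₂) (s ⊓ t),
    coupling_snd_apply μ₂ (comCoupling_snd μ₁ μ₂) (s ⊓ t),
    comCoupling_quadrant μ₁ μ₂ s t, comCoupling_quadrant μ₁ μ₂ t s] at idγ₀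
  have hq1 : (γ {z : ℝ × ℝ | z.1 ≤ s ∧ z.2 ≤ t}).toReal
      ≤ (ENNReal.ofReal (mcdf μ₁ s ⊓ mcdf μ₂ t)).toReal := by
    apply ENNReal.toReal_mono ENNReal.ofReal_ne_top
    exact coupling_quadrant_le μ₁ μ₂ h1 h2 s t
  have hq2 : (γ {z : ℝ × ℝ | z.1 ≤ t ∧ z.2 ≤ s}).toReal
      ≤ (ENNReal.ofReal (mcdf μ₁ t ⊓ mcdf μ₂ s)).toReal := by
    apply ENNReal.toReal_mono ENNReal.ofReal_ne_top
    exact coupling_quadrant_le μ₁ μ₂ h1 h2 t s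
  have key : (γ₀ (sqEvent s t)).toReal ≤ (γ (sqEvent s t)).toReal := by linarith
  exact (ENNReal.toReal_le_toReal (measure_ne_top γ₀ _) (measure_ne_top γ _)).1 key

end Coupling

section Calculus
open intervalIntegral

lemma intervalIntegrable_abs_rpow {q : ℝ} (hq : -1 < q) {s a b : ℝ} (ha : a ≤ s) (hb : s ≤ b) :
    IntervalIntegrable (fun t => |s - t| ^ q) volume a b := by
  have h1 : IntervalIntegrable (fun t : ℝ => (s - t) ^ q) volume a s := by
    have := (intervalIntegrable_rpow' (a := s - a) (b := (0:ℝ)) hq).comp_sub_left s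
    simpa using this
  have h2 : IntervalIntegrable (fun t : ℝ => (t - s) ^ q) volume s b := by
    have := (intervalIntegrable_rpow' (a := (0:ℝ)) (b := b - s) hq).comp_sub_right s
    simpa using this
  have h1' : IntervalIntegrable (fun t => |s - t| ^ q) volume a s := by
    rw [intervalIntegrable_iff] at h1 ⊢
    refine h1.congr_fun ?_ measurableSet_uIoc
    intro t ht
    rw [Set.uIoc_of_le ha] at ht
    show (s - t) ^ q = |s - t| ^ q
    rw [abs_of_nonneg (by linarith [ht.2] : (0:ℝ) ≤ s - t)]
  have h2' : IntervalIntegrable (fun t => |s - t| ^ q) volume s b := by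
    rw [intervalIntegrable_iff] at h2 ⊢
    refine h2.congr_fun ?_ measurableSet_uIoc
    intro t ht
    rw [Set.uIoc_of_le hb] at ht
    show (t - s) ^ q = |s - t| ^ q
    rw [abs_sub_comm, abs_of_nonneg (by linarith [ht.1] : (0:ℝ) ≤ t - s)]
  exact h1'.trans h2'

lemma integral_abs_rpow {q : ℝ} (hq : -1 < q) {s a b : ℝ} (ha : a ≤ s) (hb : s ≤ b) :
    ∫ t in a..b, |s - t| ^ q = ((s - a) ^ (q+1) + (b - s) ^ (q+1)) / (q+1) := by
  have hq1 : (0:ℝ) < q + 1 := by linarith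
  have h1 : ∫ t in a..s, |s - t| ^ q = (s - a) ^ (q+1) / (q+1) := by
    have e : ∫ t in a..s, |s - t| ^ q = ∫ t in a..s, (s - t) ^ q := by
      refine intervalIntegral.integral_congr fun t ht => ?_
      rw [Set.uIcc_of_le ha] at ht
      rw [abs_of_nonneg (by linarith [ht.2] : (0:ℝ) ≤ s - t)]
    rw [e, intervalIntegral.integral_comp_sub_left (fun u => u ^ q) s, sub_self,
      integral_rpow (Or.inl hq), Real.zero_rpow (ne_of_gt hq1)]
    ring
  have h2 : ∫ t in s..b, |s - t| ^ q = (b - s) ^ (q+1) / (q+1) := by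
    have e : ∫ t in s..b, |s - t| ^ q = ∫ t in s..b, (t - s) ^ q := by
      refine intervalIntegral.integral_congr fun t ht => ?_
      rw [Set.uIcc_of_le hb] at ht
      rw [abs_sub_comm, abs_of_nonneg (by linarith [ht.1] : (0:ℝ) ≤ t - s)]
    rw [e, intervalIntegral.integral_comp_sub_right (fun u => u ^ q) s, sub_self,
      integral_rpow (Or.inl hq), Real.zero_rpow (ne_of_gt hq1)]
    ring
  rw [← intervalIntegral.integral_add_adjacent_intervals
    (intervalIntegrable_abs_rpow hq ha le_rfl) (intervalIntegrable_abs_rpow hq le_rfl hb),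
    h1, h2, ← add_div]

lemma inner_lintegral {q : ℝ} (hq : -1 < q) {c : ℝ} (hc : 0 ≤ c) {m M s : ℝ}
    (hm : m ≤ s) (hM : s ≤ M) :
    ∫⁻ t in Ico m M, ENNReal.ofReal (c * |s - t| ^ q)
      = ENNReal.ofReal (c / (q+1) * ((s - m) ^ (q+1) + (M - s) ^ (q+1))) := by
  have hq1 : (0:ℝ) < q + 1 := by linarith
  rw [Measure.restrict_congr_set Ico_ae_eq_Ioc]
  have hint : IntegrableOn (fun t => c * |s - t| ^ q) (Ioc m M) volume := by
    have := ((intervalIntegrable_abs_rpow hq hm hM).const_mul c)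
    rw [intervalIntegrable_iff, Set.uIoc_of_le (hm.trans hM)] at this
    exact this
  rw [← ofReal_integral_eq_lintegral_ofReal hint (Eventually.of_forall fun t =>
    mul_nonneg hc (Real.rpow_nonneg (abs_nonneg _) q))]
  congr 1
  rw [← intervalIntegral.integral_of_le (hm.trans hM), intervalIntegral.integral_const_mul,
    integral_abs_rpow hq hm hM]
  ring

lemma outer_lintegral {e : ℝ} (he : 0 < e) {c : ℝ} (hc : 0 ≤ c) {m M : ℝ} (hmM : m ≤ M) :
    ∫⁻ s in Ico m M, ENNReal.ofReal (c * ((s - m) ^ e + (M - s) ^ e))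
      = ENNReal.ofReal (c * 2 * (M - m) ^ (e+1) / (e+1)) := by
  have he1 : (0:ℝ) < e + 1 := by linarith
  have hcont1 : Continuous fun s : ℝ => (s - m) ^ e :=
    (continuous_id.sub continuous_const).rpow_const (fun x => Or.inr he.le)
  have hcont2 : Continuous fun s : ℝ => (M - s) ^ e :=
    (continuous_const.sub continuous_id).rpow_const (fun x => Or.inr he.le)
  have hcont : Continuous fun s : ℝ => c * ((s - m) ^ e + (M - s) ^ e) :=
    continuous_const.mul (hcont1.add hcont2)
  rw [Measure.restrict_congr_set Ico_ae_eq_Ioc]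
  have hint : IntegrableOn (fun s => c * ((s - m) ^ e + (M - s) ^ e)) (Ioc m M) volume := by
    have : IntervalIntegrable (fun s => c * ((s - m) ^ e + (M - s) ^ e)) volume m M :=
      hcont.intervalIntegrable m M
    rw [intervalIntegrable_iff, Set.uIoc_of_le hmM] at this
    exact this
  have hnn : ∀ s : ℝ, s ∈ Ioc m M → 0 ≤ c * ((s - m) ^ e + (M - s) ^ e) := by
    intro s hs
    have h1 : (0:ℝ) ≤ (s - m) ^ e := Real.rpow_nonneg (by linarith [hs.1] : (0:ℝ) ≤ s - m) e
    have h2 : (0:ℝ) ≤ (M - s) ^ e := Real.rpow_nonneg (by linarith [hs.2] : (0:ℝ) ≤ M - s) e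
    positivity
  rw [← ofReal_integral_eq_lintegral_ofReal hint ?nn]
  case nn =>
    filter_upwards [ae_restrict_mem measurableSet_Ioc] with s hs
    exact hnn s hs
  congr 1
  rw [← intervalIntegral.integral_of_le hmM, intervalIntegral.integral_const_mul]
  have i1 : ∫ s in m..M, (s - m) ^ e = (M - m) ^ (e+1) / (e+1) := by
    rw [intervalIntegral.integral_comp_sub_right (fun u => u ^ e) m, sub_self,
      integral_rpow (Or.inl (by linarith : (-1:ℝ) < e)), Real.zero_rpow (ne_of_gt he1)]
    ring
  have i2 : ∫ s in m..M, (M - s) ^ e = (M - m) ^ (e+1) / (e+1) := by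
    rw [intervalIntegral.integral_comp_sub_left (fun u => u ^ e) M, sub_self,
      integral_rpow (Or.inl (by linarith : (-1:ℝ) < e)), Real.zero_rpow (ne_of_gt he1)]
    ring
  rw [intervalIntegral.integral_add ?ia ?ib, i1, i2]
  case ia => exact (hcont1.intervalIntegrable m M : IntervalIntegrable _ volume m M)
  case ib => exact (hcont2.intervalIntegrable m M : IntervalIntegrable _ volume m M)
  ring

end Calculus

section Kernels

/-- The square attached to a pair of reals. -/
def pairSquare (x y : ℝ) : Set (ℝ × ℝ) :=
  {w : ℝ × ℝ | (min x y ≤ w.1 ∧ w.1 < max x y) ∧ (min x y ≤ w.2 ∧ w.2 < max x y)}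

lemma pairSquare_eq_prod (x y : ℝ) :
    pairSquare x y = Ico (min x y) (max x y) ×ˢ Ico (min x y) (max x y) := by
  ext w
  simp [pairSquare, Set.mem_prod, mem_Ico]

lemma measurableSet_pairSquare (x y : ℝ) : MeasurableSet (pairSquare x y) := by
  rw [pairSquare_eq_prod]
  exact measurableSet_Ico.prod measurableSet_Ico

/-- Diagonal copy of Lebesgue measure, the kernel for `p = 1`. -/
noncomputable def diagK : Measure (ℝ × ℝ) := volume.map (fun s : ℝ => (s, s))

instance : SFinite diagK := by unfold diagK; infer_instance

lemma diagK_square (x y : ℝ) :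
    diagK (pairSquare x y) = ENNReal.ofReal (|x - y| ^ (1:ℝ)) := by
  rw [diagK, Measure.map_apply
    (show Measurable fun s : ℝ => (s, s) from measurable_id.prodMk measurable_id)
    (measurableSet_pairSquare x y)]
  have : (fun s : ℝ => (s, s)) ⁻¹' pairSquare x y = Ico (min x y) (max x y) := by
    ext s
    simp only [mem_preimage, pairSquare, mem_setOf_eq, mem_Ico]
    tauto
  rw [this, Real.volume_Ico, max_sub_min_eq_abs, Real.rpow_one, abs_sub_comm]

/-- The kernel density for `p > 1`. -/
noncomputable def powK (p : ℝ) : Measure (ℝ × ℝ) :=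
  volume.withDensity (fun w : ℝ × ℝ => ENNReal.ofReal (p * (p-1) / 2 * |w.1 - w.2| ^ (p-2)))

instance (p : ℝ) : SFinite (powK p) := by unfold powK; infer_instance

lemma powK_square {p : ℝ} (hp : 1 < p) (x y : ℝ) :
    powK p (pairSquare x y) = ENNReal.ofReal (|x - y| ^ p) := by
  have hq : (-1:ℝ) < p - 2 := by linarith
  have hc : (0:ℝ) ≤ p * (p-1) / 2 := by nlinarith
  set m := min x y
  set M := max x y
  have hmM : m ≤ M := min_le_max
  have hmeas : Measurable fun w : ℝ × ℝ =>
      ENNReal.ofReal (p * (p-1) / 2 * |w.1 - w.2| ^ (p-2)) := by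
    apply Measurable.ennreal_ofReal
    exact measurable_const.mul (((measurable_fst.sub measurable_snd).abs).pow measurable_const)
  rw [powK, withDensity_apply _ (measurableSet_pairSquare x y), pairSquare_eq_prod]
  rw [Measure.volume_eq_prod, ← Measure.prod_restrict]
  rw [MeasureTheory.lintegral_prod _ hmeas.aemeasurable]
  have hinner : ∀ s ∈ Ico m M,
      (∫⁻ t in Ico m M, ENNReal.ofReal (p * (p-1) / 2 * |s - t| ^ (p-2)))
        = ENNReal.ofReal (p / 2 * ((s - m) ^ (p-1) + (M - s) ^ (p-1))) := by
    intro s hs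
    rw [inner_lintegral hq hc hs.1 hs.2.le]
    have e : p - 2 + 1 = p - 1 := by ring
    rw [e]
    have hne : p - 1 ≠ 0 := by linarith
    have hcoef : p * (p-1) / 2 / (p - 1) = p / 2 := by field_simp
    rw [hcoef]
  rw [setLIntegral_congr_fun measurableSet_Ico hinner]
  rw [outer_lintegral (by linarith : (0:ℝ) < p - 1) (by linarith : (0:ℝ) ≤ p / 2) hmM]
  have h1 : p - 1 + 1 = p := by ring
  rw [h1]
  have hMm : M - m = |x - y| := by rw [max_sub_min_eq_abs, abs_sub_comm]
  rw [hMm]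
  congr 1
  have hpne : p ≠ 0 := by linarith
  field_simp

end Kernels

section Core

def bigS : Set ((ℝ × ℝ) × (ℝ × ℝ)) := {q | q.2 ∈ pairSquare q.1.1 q.1.2}

lemma measurableSet_bigS : MeasurableSet bigS := by
  have h1 : Measurable fun q : (ℝ × ℝ) × (ℝ × ℝ) => min q.1.1 q.1.2 :=
    (measurable_fst.fst).min (measurable_fst.snd)
  have h2 : Measurable fun q : (ℝ × ℝ) × (ℝ × ℝ) => max q.1.1 q.1.2 :=
    (measurable_fst.fst).max (measurable_fst.snd)
  have h3 : Measurable fun q : (ℝ × ℝ) × (ℝ × ℝ) => q.2.1 := measurable_snd.fst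
  have h4 : Measurable fun q : (ℝ × ℝ) × (ℝ × ℝ) => q.2.2 := measurable_snd.snd
  unfold bigS pairSquare
  apply MeasurableSet.inter <;> apply MeasurableSet.inter
  · exact measurableSet_le h1 h3
  · exact measurableSet_lt h3 h2
  · exact measurableSet_le h1 h4
  · exact measurableSet_lt h4 h2

lemma core_kernel_rep (γ : Measure (ℝ × ℝ)) [IsFiniteMeasure γ] (κ : Measure (ℝ × ℝ))
    [SFinite κ] (p : ℝ)
    (hκ : ∀ x y : ℝ, κ (pairSquare x y) = ENNReal.ofReal (|x - y| ^ p)) :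
    ∫⁻ z, ENNReal.ofReal (|z.1 - z.2| ^ p) ∂γ = ∫⁻ w, γ (sqEvent w.1 w.2) ∂κ := by
  have hS : MeasurableSet bigS := measurableSet_bigS
  have step1 : ∀ z : ℝ × ℝ, ENNReal.ofReal (|z.1 - z.2| ^ p)
      = ∫⁻ w, bigS.indicator (fun _ => (1:ℝ≥0∞)) (z, w) ∂κ := by
    intro z
    rw [← hκ z.1 z.2]
    have h : ∀ w, bigS.indicator (fun _ => (1:ℝ≥0∞)) (z, w)
        = (pairSquare z.1 z.2).indicator (fun _ => 1) w := by
      intro w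
      by_cases h : w ∈ pairSquare z.1 z.2
      · rw [Set.indicator_of_mem h, Set.indicator_of_mem (show (z, w) ∈ bigS from h)]
      · rw [Set.indicator_of_notMem h, Set.indicator_of_notMem (show (z, w) ∉ bigS from h)]
    rw [lintegral_congr h, lintegral_indicator (measurableSet_pairSquare _ _), setLIntegral_one]
  have step2 : ∀ w : ℝ × ℝ, (∫⁻ z, bigS.indicator (fun _ => (1:ℝ≥0∞)) (z, w) ∂γ)
      = γ (sqEvent w.1 w.2) := by
    intro w
    have h : ∀ z, bigS.indicator (fun _ => (1:ℝ≥0∞)) (z, w)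
        = (sqEvent w.1 w.2).indicator (fun _ => 1) z := by
      intro z
      by_cases h : z ∈ sqEvent w.1 w.2
      · rw [Set.indicator_of_mem h, Set.indicator_of_mem (show (z, w) ∈ bigS from h)]
      · rw [Set.indicator_of_notMem h, Set.indicator_of_notMem (show (z, w) ∉ bigS from h)]
    rw [lintegral_congr h, lintegral_indicator (measurableSet_sqEvent _ _), setLIntegral_one]
  calc ∫⁻ z, ENNReal.ofReal (|z.1 - z.2| ^ p) ∂γ
      = ∫⁻ z, ∫⁻ w, bigS.indicator (fun _ => (1:ℝ≥0∞)) (z, w) ∂κ ∂γ := lintegral_congr step1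
    _ = ∫⁻ w, ∫⁻ z, bigS.indicator (fun _ => (1:ℝ≥0∞)) (z, w) ∂γ ∂κ :=
        lintegral_lintegral_swap ((measurable_const.indicator hS).aemeasurable)
    _ = ∫⁻ w, γ (sqEvent w.1 w.2) ∂κ := lintegral_congr step2

lemma lintegral_comparison (p : ℝ) (hp : 1 ≤ p)
    (μ₁ μ₂ : Measure ℝ) [IsProbabilityMeasure μ₁] [IsProbabilityMeasure μ₂]
    {γ : Measure (ℝ × ℝ)} [IsProbabilityMeasure γ]
    (h1 : γ.map Prod.fst = μ₁) (h2 : γ.map Prod.snd = μ₂) :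
    ∫⁻ z, ENNReal.ofReal (|z.1 - z.2| ^ p) ∂(comCoupling μ₁ μ₂)
      ≤ ∫⁻ z, ENNReal.ofReal (|z.1 - z.2| ^ p) ∂γ := by
  rcases eq_or_lt_of_le hp with hp1 | hp1
  · have hκ : ∀ x y : ℝ, diagK (pairSquare x y) = ENNReal.ofReal (|x - y| ^ p) := by
      intro x y; rw [← hp1]; exact diagK_square x y
    rw [core_kernel_rep _ diagK p hκ, core_kernel_rep _ diagK p hκ]
    exact lintegral_mono fun w => sqEvent_comparison μ₁ μ₂ h1 h2 w.1 w.2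
  · have hκ : ∀ x y : ℝ, powK p (pairSquare x y) = ENNReal.ofReal (|x - y| ^ p) :=
      powK_square hp1
    rw [core_kernel_rep _ (powK p) p hκ, core_kernel_rep _ (powK p) p hκ]
    exact lintegral_mono fun w => sqEvent_comparison μ₁ μ₂ h1 h2 w.1 w.2

end Core

section Assembly

lemma measurable_phi (p : ℝ) : Measurable fun z : ℝ × ℝ => |z.1 - z.2| ^ p :=
  ((measurable_fst.sub measurable_snd).abs).pow measurable_const

lemma phi_nonneg (p : ℝ) (z : ℝ × ℝ) : 0 ≤ |z.1 - z.2| ^ p :=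
  Real.rpow_nonneg (abs_nonneg _) p

lemma integrable_phi (p : ℝ) (hp : 1 ≤ p)
    (μ₁ μ₂ : Measure ℝ) [IsProbabilityMeasure μ₁] [IsProbabilityMeasure μ₂]
    (hmom₁ : Integrable (fun x => |x| ^ p) μ₁)
    (hmom₂ : Integrable (fun x => |x| ^ p) μ₂)
    {γ : Measure (ℝ × ℝ)} [IsProbabilityMeasure γ]
    (h1 : γ.map Prod.fst = μ₁) (h2 : γ.map Prod.snd = μ₂) :
    Integrable (fun z : ℝ × ℝ => |z.1 - z.2| ^ p) γ := by
  have hm : AEStronglyMeasurable (fun x : ℝ => |x| ^ p) μ₁ :=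
    ((measurable_id.abs).pow measurable_const).aestronglyMeasurable
  have hm2 : AEStronglyMeasurable (fun x : ℝ => |x| ^ p) μ₂ :=
    ((measurable_id.abs).pow measurable_const).aestronglyMeasurable
  have hi1 : Integrable (fun z : ℝ × ℝ => |z.1| ^ p) γ := by
    rw [← h1] at hmom₁ hm
    exact (integrable_map_measure hm measurable_fst.aemeasurable).mp hmom₁
  have hi2 : Integrable (fun z : ℝ × ℝ => |z.2| ^ p) γ := by
    rw [← h2] at hmom₂ hm2
    exact (integrable_map_measure hm2 measurable_snd.aemeasurable).mp hmom₂
  have hbound : ∀ z : ℝ × ℝ, |z.1 - z.2| ^ p ≤ 2 ^ p * (|z.1| ^ p + |z.2| ^ p) := by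
    intro z
    have h0 : |z.1 - z.2| ≤ 2 * max |z.1| |z.2| := by
      calc |z.1 - z.2| ≤ |z.1| + |z.2| := abs_sub _ _
        _ ≤ max |z.1| |z.2| + max |z.1| |z.2| := by
            exact add_le_add (le_max_left _ _) (le_max_right _ _)
        _ = 2 * max |z.1| |z.2| := by ring
    calc |z.1 - z.2| ^ p ≤ (2 * max |z.1| |z.2|) ^ p :=
          Real.rpow_le_rpow (abs_nonneg _) h0 (by linarith)
      _ = 2 ^ p * (max |z.1| |z.2|) ^ p := by
          rw [Real.mul_rpow (by norm_num) (le_max_iff.2 (Or.inl (abs_nonneg _)))]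
      _ ≤ 2 ^ p * (|z.1| ^ p + |z.2| ^ p) := by
          gcongr
          rcases max_cases |z.1| |z.2| with ⟨h, _⟩ | ⟨h, _⟩ <;> rw [h]
          · nlinarith [Real.rpow_nonneg (abs_nonneg z.2) p]
          · nlinarith [Real.rpow_nonneg (abs_nonneg z.1) p]
  refine ((hi1.add hi2).const_mul ((2:ℝ) ^ p)).mono
    (measurable_phi p).aestronglyMeasurable (Eventually.of_forall fun z => ?_)
  rw [Real.norm_eq_abs, Real.norm_eq_abs, abs_of_nonneg (phi_nonneg p z)]
  refine (hbound z).trans (le_abs_self _)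

lemma integral_phi_comCoupling (p : ℝ)
    (μ₁ μ₂ : Measure ℝ) [IsProbabilityMeasure μ₁] [IsProbabilityMeasure μ₂] :
    ∫ z : ℝ × ℝ, |z.1 - z.2| ^ p ∂(comCoupling μ₁ μ₂)
      = ∫ r in (0:ℝ)..1, |mquantile μ₁ r - mquantile μ₂ r| ^ p := by
  rw [comCoupling, integral_map (aemeasurable_pair μ₁ μ₂)
    (measurable_phi p).aestronglyMeasurable]
  rw [intervalIntegral.integral_of_le zero_le_one, integral_Ioc_eq_integral_Ioo]

theorem wasserstein_1d_quantile_representation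
    (p : ℝ) (hp : 1 ≤ p)
    (μ₁ μ₂ : Measure ℝ) [IsProbabilityMeasure μ₁] [IsProbabilityMeasure μ₂]
    (hmom₁ : Integrable (fun x => |x| ^ p) μ₁)
    (hmom₂ : Integrable (fun x => |x| ^ p) μ₂) :
    IsLeast
      {c : ℝ | ∃ γ : Measure (ℝ × ℝ), IsProbabilityMeasure γ ∧
        γ.map Prod.fst = μ₁ ∧ γ.map Prod.snd = μ₂ ∧
        c = ∫ z : ℝ × ℝ, |z.1 - z.2| ^ p ∂γ}
      (∫ r in (0:ℝ)..1, |mquantile μ₁ r - mquantile μ₂ r| ^ p) ∧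
    (let γ₀ : Measure (ℝ × ℝ) :=
        Measure.map (fun r => (mquantile μ₁ r, mquantile μ₂ r))
          (volume.restrict (Set.Ioo (0:ℝ) 1));
      γ₀.map Prod.fst = μ₁ ∧ γ₀.map Prod.snd = μ₂ ∧
      (∫ z : ℝ × ℝ, |z.1 - z.2| ^ p ∂γ₀)
        = ∫ r in (0:ℝ)..1, |mquantile μ₁ r - mquantile μ₂ r| ^ p) := by
  have hγ₀eq : (Measure.map (fun r => (mquantile μ₁ r, mquantile μ₂ r))
      (volume.restrict (Set.Ioo (0:ℝ) 1))) = comCoupling μ₁ μ₂ := rfl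
  constructor
  · constructor
    · refine ⟨comCoupling μ₁ μ₂, inferInstance, comCoupling_fst μ₁ μ₂, comCoupling_snd μ₁ μ₂,
        (integral_phi_comCoupling p μ₁ μ₂).symm⟩
    · rintro c ⟨γ, hγP, hγ1, hγ2, rfl⟩
      have hintγ : Integrable (fun z : ℝ × ℝ => |z.1 - z.2| ^ p) γ :=
        integrable_phi p hp μ₁ μ₂ hmom₁ hmom₂ hγ1 hγ2
      have hintγ₀ : Integrable (fun z : ℝ × ℝ => |z.1 - z.2| ^ p) (comCoupling μ₁ μ₂) :=
        integrable_phi p hp μ₁ μ₂ hmom₁ hmom₂ (comCoupling_fst μ₁ μ₂) (comCoupling_snd μ₁ μ₂)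
      have hnn : ∀ (ν : Measure (ℝ × ℝ)), (0:ℝ × ℝ → ℝ) ≤ᵐ[ν] fun z => |z.1 - z.2| ^ p :=
        fun ν => Eventually.of_forall (phi_nonneg p)
      have e₀ : ENNReal.ofReal (∫ z : ℝ × ℝ, |z.1 - z.2| ^ p ∂(comCoupling μ₁ μ₂))
          = ∫⁻ z, ENNReal.ofReal (|z.1 - z.2| ^ p) ∂(comCoupling μ₁ μ₂) :=
        ofReal_integral_eq_lintegral_ofReal hintγ₀ (hnn _)
      have eγ : ENNReal.ofReal (∫ z : ℝ × ℝ, |z.1 - z.2| ^ p ∂γ)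
          = ∫⁻ z, ENNReal.ofReal (|z.1 - z.2| ^ p) ∂γ :=
        ofReal_integral_eq_lintegral_ofReal hintγ (hnn _)
      have hle := lintegral_comparison p hp μ₁ μ₂ hγ1 hγ2
      rw [← e₀, ← eγ] at hle
      have := (ENNReal.ofReal_le_ofReal_iff (integral_nonneg (phi_nonneg p))).1 hle
      calc ∫ r in (0:ℝ)..1, |mquantile μ₁ r - mquantile μ₂ r| ^ p
          = ∫ z : ℝ × ℝ, |z.1 - z.2| ^ p ∂(comCoupling μ₁ μ₂) :=
            (integral_phi_comCoupling p μ₁ μ₂).symm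
        _ ≤ _ := this
  · exact ⟨comCoupling_fst μ₁ μ₂, comCoupling_snd μ₁ μ₂, integral_phi_comCoupling p μ₁ μ₂⟩

end Assembly
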